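/- Let m ≥ 3, C ⊆ ℝⁿ compact, and suppose f ∈ C^m(ℝⁿ) together with its derivatives satisfies (CW^{m}) with a strict inequality on C: there exist η > 0, t₀ > 0 with D²f(y)(v²) + t D³f(y)(w,v²) + … + (t^{m−2}/(m−2)!) D^m f(y)(w^{m−2},v²) ≥ η t^{m−2} for all y ∈ C, unit v, w, 0 < t ≤ t₀. Then there exists t₀' > 0 such that D²f(x)(v,v) ≥ 0 whenever d(x,C) ≤ t₀', i.e. f is convex on the open neighbourhood {x : d(x,C) < t₀'} of C. -/

import Mathlib

/-- The sum `∑_{k=2}^m (t^{k-2}/(k-2)!) Dᵏf(y)(w^{k-2}, v²)` appearing in condition `(CWᵐ)`. -/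
noncomputable def cwSum {n : ℕ} (m : ℕ) (f : EuclideanSpace ℝ (Fin n) → ℝ)
    (y v w : EuclideanSpace ℝ (Fin n)) (t : ℝ) : ℝ :=
  ∑ k ∈ Finset.Icc 2 m,
    (t ^ (k - 2) / (Nat.factorial (k - 2))) *
      iteratedFDeriv ℝ k f y (fun i => if (i : ℕ) < k - 2 then w else v)

/-- Condition `(CWᵐ)` of Azagra-Mudarra on a set `C`. -/
def CW {n : ℕ} (m : ℕ) (f : EuclideanSpace ℝ (Fin n) → ℝ)
    (C : Set (EuclideanSpace ℝ (Fin n))) : Prop :=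
  ∀ ε > (0:ℝ), ∃ tε > (0:ℝ), ∀ y ∈ C, ∀ v w : EuclideanSpace ℝ (Fin n),
    ‖v‖ = 1 → ‖w‖ = 1 → ∀ t : ℝ, 0 < t → t ≤ tε →
      -ε * t ^ (m - 2) ≤ cwSum m f y v w t

/-- Derivative of `s ↦ D^{j+2}f(y+sw)(w^j, v²)` in `s`. -/
lemma hasDerivAt_g {n : ℕ} {f : EuclideanSpace ℝ (Fin n) → ℝ} {m : ℕ}
    (hf : ContDiff ℝ (m : ℕ∞) f) (y v w : EuclideanSpace ℝ (Fin n)) {j : ℕ}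
    (hj : j + 3 ≤ m) (s : ℝ) :
    HasDerivAt (fun s : ℝ => iteratedFDeriv ℝ (j+2) f (y + s • w)
        (fun i : Fin (j+2) => if (i : ℕ) < j then w else v))
      (iteratedFDeriv ℝ (j+3) f (y + s • w)
        (fun i : Fin (j+3) => if (i : ℕ) < j+1 then w else v)) s := by
  have hdiff : Differentiable ℝ (iteratedFDeriv ℝ (j+2) f) :=
    hf.differentiable_iteratedFDeriv (Nat.cast_lt.mpr (by omega))
  have hc : HasDerivAt (fun s : ℝ => y + s • w) w s := by
    simpa using ((hasDerivAt_id s).smul_const w).const_add y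
  have h1 : HasFDerivAt
      (fun x => iteratedFDeriv ℝ (j+2) f x (fun i : Fin (j+2) => if (i : ℕ) < j then w else v))
      ((fderiv ℝ (iteratedFDeriv ℝ (j+2) f) (y + s • w)).flipMultilinear
        (fun i : Fin (j+2) => if (i : ℕ) < j then w else v)) (y + s • w) :=
    (hdiff _).hasFDerivAt.continuousMultilinear_apply_const _
  have h2 := h1.comp_hasDerivAt s hc
  refine h2.congr_deriv ?_
  symm
  have h3 := iteratedFDeriv_succ_apply_left (𝕜 := ℝ) (f := f) (n := j + 2)
    (x := y + s • w) (fun i : Fin (j+3) => if (i : ℕ) < j+1 then w else v)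
  rw [show ((j:ℕ)+3) = (j+2)+1 from rfl, h3]
  rw [ContinuousLinearMap.flipMultilinear_apply_apply]
  congr 1
  · funext i
    simp only [Fin.tail, Fin.val_succ]
    congr 1
    simp [Nat.succ_lt_succ_iff]

/-- Quantitative Taylor remainder bound for a chain of derivatives. -/
lemma taylor_bound (g : ℕ → ℝ → ℝ) (N : ℕ) (hN : 1 ≤ N) (t : ℝ) (ht : 0 < t)
    (ε : ℝ) (hε : 0 ≤ ε)
    (hderiv : ∀ j < N, ∀ s ∈ Set.Icc (0:ℝ) t, HasDerivAt (g j) (g (j+1) s) s)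
    (hosc : ∀ s ∈ Set.Icc (0:ℝ) t, |g N s - g N 0| ≤ ε) :
    |g 0 t - ∑ j ∈ Finset.range (N+1), t ^ j / (Nat.factorial j) * g j 0| ≤ ε * t ^ N := by
  set F : ℝ → ℝ := fun s =>
    (∑ j ∈ Finset.range N, (t - s) ^ j / (Nat.factorial j) * g j s)
      + (t - s) ^ N / (Nat.factorial N) * g N 0 with hFdef
  have hF : ∀ s ∈ Set.Icc (0:ℝ) t,
      HasDerivAt F ((t - s) ^ (N-1) / (Nat.factorial (N-1)) * (g N s - g N 0)) s := by
    intro s hs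
    have hpow : ∀ k : ℕ, HasDerivAt (fun s : ℝ => (t - s) ^ k)
        ((k : ℝ) * (t - s) ^ (k - 1) * (-1)) s := by
      intro k
      exact (((hasDerivAt_id s).const_sub t)).pow k
    set u : ℕ → ℝ := fun k => ((k : ℝ) * (t - s) ^ (k - 1) / (Nat.factorial k)) * g k s
      with hu
    have hterm : ∀ j ∈ Finset.range N,
        HasDerivAt (fun s => (t - s) ^ j / (Nat.factorial j) * g j s) (u (j+1) - u j) s := by
      intro j hj
      have hj' := Finset.mem_range.mp hj
      have h := ((hpow j).div_const (Nat.factorial j)).mul (hderiv j hj' s hs)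
      refine h.congr_deriv ?_
      symm
      have hfac : ((Nat.factorial (j+1) : ℝ)) = (j+1) * Nat.factorial j := by
        push_cast [Nat.factorial_succ]; ring
      have hfj : (Nat.factorial j : ℝ) ≠ 0 := by positivity
      have hfj1 : (Nat.factorial (j+1) : ℝ) ≠ 0 := by positivity
      simp only [hu, Nat.add_sub_cancel]
      rw [hfac]
      push_cast
      field_simp
      ring
    have hsum := HasDerivAt.fun_sum hterm
    have hlast := ((hpow N).div_const (Nat.factorial N)).mul_const (g N 0)
    have htot := hsum.add hlast
    have heq : (∑ j ∈ Finset.range N, (u (j+1) - u j))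
        + ((N : ℝ) * (t - s) ^ (N-1) * (-1) / (Nat.factorial N)) * g N 0
        = (t - s) ^ (N-1) / (Nat.factorial (N-1)) * (g N s - g N 0) := by
      rw [Finset.sum_range_sub]
      have h0 : u 0 = 0 := by simp [hu]
      have hN' : u N = (t - s) ^ (N-1) / (Nat.factorial (N-1)) * g N s := by
        obtain ⟨M, rfl⟩ : ∃ M, N = M + 1 := ⟨N - 1, by omega⟩
        simp only [hu, Nat.add_sub_cancel]
        have hfac : ((Nat.factorial (M+1) : ℝ)) = (M+1) * Nat.factorial M := by
          push_cast [Nat.factorial_succ]; ring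
        rw [hfac]
        have : (Nat.factorial M : ℝ) ≠ 0 := by positivity
        field_simp
        push_cast
        ring
      have hNN : ((N : ℝ) * (t - s) ^ (N-1) / (Nat.factorial N))
          = (t - s) ^ (N-1) / (Nat.factorial (N-1)) := by
        obtain ⟨M, rfl⟩ : ∃ M, N = M + 1 := ⟨N - 1, by omega⟩
        simp only [Nat.add_sub_cancel]
        have hfac : ((Nat.factorial (M+1) : ℝ)) = (M+1) * Nat.factorial M := by
          push_cast [Nat.factorial_succ]; ring
        rw [hfac]
        have : (Nat.factorial M : ℝ) ≠ 0 := by positivity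
        push_cast
        field_simp
      rw [h0, hN']
      rw [show ((N : ℝ) * (t - s) ^ (N-1) * (-1) / (Nat.factorial N))
          = -(((N : ℝ) * (t - s) ^ (N-1) / (Nat.factorial N))) by ring, hNN]
      ring
    rw [← heq]
    exact htot
  have hbound : ∀ s ∈ Set.Icc (0:ℝ) t,
      ‖(t - s) ^ (N-1) / (Nat.factorial (N-1)) * (g N s - g N 0)‖ ≤ ε * t ^ (N-1) := by
    intro s hs
    rw [Real.norm_eq_abs, abs_mul, abs_div]
    have h1 : 0 ≤ t - s := by linarith [hs.2]
    have h2 : t - s ≤ t := by linarith [hs.1]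
    have h3 : |(t - s) ^ (N-1)| ≤ t ^ (N-1) := by
      rw [abs_of_nonneg (by positivity)]
      exact pow_le_pow_left₀ h1 h2 _
    have h4 : (1 : ℝ) ≤ |(Nat.factorial (N-1) : ℝ)| := by
      rw [abs_of_nonneg (by positivity)]
      exact_mod_cast Nat.one_le_iff_ne_zero.mpr (Nat.factorial_ne_zero _)
    have h5 : |(t - s) ^ (N-1)| / |(Nat.factorial (N-1) : ℝ)| ≤ t ^ (N-1) := by
      calc |(t - s) ^ (N-1)| / |(Nat.factorial (N-1) : ℝ)| ≤ |(t - s) ^ (N-1)| / 1 :=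
            div_le_div_of_nonneg_left (abs_nonneg _) one_pos h4 |>.trans_eq rfl
        _ = |(t - s) ^ (N-1)| := by rw [div_one]
        _ ≤ t ^ (N-1) := h3
    calc |(t - s) ^ (N-1)| / |(Nat.factorial (N-1) : ℝ)| * |g N s - g N 0|
        ≤ t ^ (N-1) * ε := by
          apply mul_le_mul h5 (hosc s hs) (abs_nonneg _) (by positivity)
      _ = ε * t ^ (N-1) := by ring
  have hmvt := (convex_Icc (0:ℝ) t).norm_image_sub_le_of_norm_hasDerivWithin_le
    (fun s hs => (hF s hs).hasDerivWithinAt) hbound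
    (Set.left_mem_Icc.mpr ht.le) (Set.right_mem_Icc.mpr ht.le)
  have hFt : F t = g 0 t := by
    simp only [hFdef, sub_self]
    rw [Finset.sum_eq_single 0, zero_pow (by omega : N ≠ 0)]
    · norm_num
    · intro j _ hj
      simp [zero_pow hj]
    · intro h
      exact absurd (Finset.mem_range.mpr (by omega)) h
  have hF0 : F 0 = ∑ j ∈ Finset.range (N+1), t ^ j / (Nat.factorial j) * g j 0 := by
    simp only [hFdef, sub_zero]
    rw [Finset.sum_range_succ]
  rw [hFt, hF0] at hmvt
  have : ‖g 0 t - ∑ j ∈ Finset.range (N+1), t ^ j / (Nat.factorial j) * g j 0‖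
      ≤ ε * t ^ (N-1) * ‖t - 0‖ := hmvt
  rw [Real.norm_eq_abs] at this
  calc |g 0 t - ∑ j ∈ Finset.range (N+1), t ^ j / (Nat.factorial j) * g j 0|
      ≤ ε * t ^ (N-1) * ‖t - 0‖ := this
    _ = ε * (t ^ (N-1) * t) := by rw [sub_zero, Real.norm_eq_abs, abs_of_pos ht]; ring
    _ = ε * t ^ N := by rw [← pow_succ]; congr 2; omega

/-- If `m ≥ 3`, `C` is compact and `f ∈ Cᵐ(ℝⁿ)` satisfies `(CWᵐ)` with a strict inequality
on `C` (with constants `η, t₀ > 0`), then there is `t₀' > 0` such that `D²f(x)(v,v) ≥ 0`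
whenever `d(x,C) ≤ t₀'`, i.e. `f` is convex on a neighbourhood of `C`. -/
theorem stmt_5 {n : ℕ} (C : Set (EuclideanSpace ℝ (Fin n))) (hCc : IsCompact C)
    (hCne : C.Nonempty) (m : ℕ) (hm : 3 ≤ m)
    (f : EuclideanSpace ℝ (Fin n) → ℝ) (hf : ContDiff ℝ (m : ℕ∞) f)
    (η t₀ : ℝ) (hη : 0 < η) (ht₀ : 0 < t₀)
    (hstrict : ∀ y ∈ C, ∀ v w : EuclideanSpace ℝ (Fin n), ‖v‖ = 1 → ‖w‖ = 1 →
      ∀ t : ℝ, 0 < t → t ≤ t₀ → η * t ^ (m - 2) ≤ cwSum m f y v w t) :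
    ∃ t₀' > (0:ℝ), ∀ x : EuclideanSpace ℝ (Fin n), Metric.infDist x C ≤ t₀' →
      ∀ v : EuclideanSpace ℝ (Fin n), ‖v‖ = 1 →
      0 ≤ iteratedFDeriv ℝ 2 f x (fun _ => v) := by
  classical
  obtain ⟨N, rfl⟩ : ∃ N, m = N + 2 := ⟨m - 2, by omega⟩
  have hN1 : 1 ≤ N := by omega
  have hm2 : (N + 2) - 2 = N := by omega
  -- uniform continuity of the top derivative on a compact thickening of C
  have hKc : IsCompact (Metric.cthickening t₀ C) := hCc.cthickening
  have hDmc : Continuous (iteratedFDeriv ℝ (N+2) f) :=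
    hf.continuous_iteratedFDeriv (le_refl _)
  obtain ⟨δ, hδpos, hδ⟩ := Metric.uniformContinuousOn_iff_le.mp
    (hKc.uniformContinuousOn_of_continuous hDmc.continuousOn) η hη
  refine ⟨min t₀ δ, lt_min ht₀ hδpos, ?_⟩
  intro x hx v hv
  obtain ⟨y, hyC, hyd⟩ := hCc.exists_infDist_eq_dist hCne x
  have htle : dist x y ≤ min t₀ δ := hyd ▸ hx
  rcases eq_or_lt_of_le (dist_nonneg : (0:ℝ) ≤ dist x y) with htz | htpos
  · -- x ∈ C : limit argument as t → 0⁺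
    have hxy : x = y := by rw [← dist_le_zero]; exact le_of_eq htz.symm
    have hxC : x ∈ C := hxy ▸ hyC
    have hkey : ∀ᶠ t in nhdsWithin (0:ℝ) (Set.Ioi 0),
        η * t ^ ((N+2) - 2) ≤ cwSum (N+2) f x v v t := by
      filter_upwards [Ioc_mem_nhdsGT_of_mem (Set.mem_Ico.mpr ⟨le_refl (0:ℝ), ht₀⟩)]
        with t ht
      exact hstrict x hxC v v hv hv t ht.1 ht.2
    have hlim1 : Filter.Tendsto (fun t : ℝ => η * t ^ ((N+2) - 2))
        (nhdsWithin (0:ℝ) (Set.Ioi 0)) (nhds 0) := by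
      have : Filter.Tendsto (fun t : ℝ => η * t ^ ((N+2) - 2)) (nhds 0)
          (nhds (η * (0:ℝ) ^ ((N+2) - 2))) := by
        exact (continuous_const.mul (continuous_pow _)).tendsto 0
      rw [hm2, zero_pow (by omega : N ≠ 0), mul_zero] at this
      exact this.mono_left nhdsWithin_le_nhds
    have hcont : Filter.Tendsto (fun t : ℝ => cwSum (N+2) f x v v t)
        (nhdsWithin (0:ℝ) (Set.Ioi 0)) (nhds (cwSum (N+2) f x v v 0)) := by
      have : Continuous (fun t : ℝ => cwSum (N+2) f x v v t) := by
        unfold cwSum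
        exact continuous_finset_sum _ fun k _ =>
          ((continuous_pow _).div_const _).mul continuous_const
      exact (this.tendsto 0).mono_left nhdsWithin_le_nhds
    have h0le : (0:ℝ) ≤ cwSum (N+2) f x v v 0 :=
      le_of_tendsto_of_tendsto hlim1 hcont hkey
    have hval : cwSum (N+2) f x v v 0 = iteratedFDeriv ℝ 2 f x (fun _ => v) := by
      unfold cwSum
      rw [Finset.sum_eq_single 2]
      · norm_num
      · intro k hk hk2
        have : k - 2 ≠ 0 := by
          simp only [Finset.mem_Icc] at hk; omega
        simp [zero_pow this]
      · intro h
        exact absurd (Finset.mem_Icc.mpr ⟨le_refl 2, by omega⟩) h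
    rw [hval] at h0le
    exact h0le
  · -- x ∉ C : Taylor argument along the segment from the nearest point
    set t := dist x y with htdef
    set w := t⁻¹ • (x - y) with hwdef
    have htne : t ≠ 0 := ne_of_gt htpos
    have hnorm : ‖x - y‖ = t := by rw [htdef, dist_eq_norm]
    have hw : ‖w‖ = 1 := by
      rw [hwdef, norm_smul, hnorm, norm_inv, Real.norm_eq_abs, abs_of_pos htpos,
        inv_mul_cancel₀ htne]
    have hxeq : y + t • w = x := by
      rw [hwdef, smul_smul, mul_inv_cancel₀ htne, one_smul]
      abel
    set g : ℕ → ℝ → ℝ := fun j s => iteratedFDeriv ℝ (j+2) f (y + s • w)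
      (fun i : Fin (j+2) => if (i : ℕ) < j then w else v) with hgdef
    have hderiv : ∀ j < N, ∀ s ∈ Set.Icc (0:ℝ) t, HasDerivAt (g j) (g (j+1) s) s := by
      intro j hj s _
      exact hasDerivAt_g hf y v w (by omega) s
    have hosc : ∀ s ∈ Set.Icc (0:ℝ) t, |g N s - g N 0| ≤ η := by
      intro s hs
      have hsy : dist (y + s • w) y = s := by
        rw [dist_eq_norm, add_sub_cancel_left, norm_smul, hw, mul_one,
          Real.norm_eq_abs, abs_of_nonneg hs.1]
      have h1 : y + s • w ∈ Metric.cthickening t₀ C :=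
        Metric.mem_cthickening_of_dist_le _ y t₀ C hyC
          (by rw [hsy]; exact hs.2.trans (htle.trans (min_le_left _ _)))
      have h2 : y ∈ Metric.cthickening t₀ C :=
        Metric.self_subset_cthickening C hyC
      have h3 := hδ _ h1 _ h2
        (by rw [hsy]; exact hs.2.trans (htle.trans (min_le_right _ _)))
      rw [dist_eq_norm] at h3
      have hg0 : g N 0 = iteratedFDeriv ℝ (N+2) f y
          (fun i : Fin (N+2) => if (i : ℕ) < N then w else v) := by
        simp [hgdef]
      have hgs : g N s - g N 0 =
          (iteratedFDeriv ℝ (N+2) f (y + s • w) - iteratedFDeriv ℝ (N+2) f y)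
            (fun i : Fin (N+2) => if (i : ℕ) < N then w else v) := by
        rw [ContinuousMultilinearMap.sub_apply, hg0, hgdef]
      rw [hgs]
      calc |(iteratedFDeriv ℝ (N+2) f (y + s • w) - iteratedFDeriv ℝ (N+2) f y)
            (fun i : Fin (N+2) => if (i : ℕ) < N then w else v)|
          ≤ ‖iteratedFDeriv ℝ (N+2) f (y + s • w) - iteratedFDeriv ℝ (N+2) f y‖
            * ∏ i : Fin (N+2), ‖if (i : ℕ) < N then w else v‖ :=
            (iteratedFDeriv ℝ (N+2) f (y + s • w)
              - iteratedFDeriv ℝ (N+2) f y).le_opNorm _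
        _ ≤ η * 1 := by
            apply mul_le_mul h3 _ (Finset.prod_nonneg fun i _ => norm_nonneg _) hη.le
            apply le_of_eq
            apply Finset.prod_eq_one
            intro i _
            by_cases h : (i : ℕ) < N <;> simp [h, hw, hv]
        _ = η := mul_one η
    have hT := taylor_bound g N hN1 t htpos η hη.le hderiv hosc
    have hSum : ∑ j ∈ Finset.range (N+1), t ^ j / (Nat.factorial j) * g j 0
        = cwSum (N+2) f y v w t := by
      unfold cwSum
      refine Finset.sum_bij' (fun (j : ℕ) (_ : j ∈ Finset.range (N+1)) => j + 2)
        (fun (k : ℕ) (_ : k ∈ Finset.Icc 2 (N+2)) => k - 2) ?_ ?_ ?_ ?_ ?_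
      · intro a ha
        simp only [Finset.mem_range] at ha
        simp only [Finset.mem_Icc]
        omega
      · intro a ha
        simp only [Finset.mem_Icc] at ha
        simp only [Finset.mem_range]
        omega
      · intro a ha
        omega
      · intro a ha
        simp only [Finset.mem_Icc] at ha
        omega
      · intro a ha
        simp [hgdef]
    have hcw := hstrict y hyC v w hv hw t htpos (htle.trans (min_le_left _ _))
    rw [hm2] at hcw
    have hgt : g 0 t = iteratedFDeriv ℝ 2 f x (fun _ => v) := by
      have : g 0 t = iteratedFDeriv ℝ 2 f (y + t • w)
          (fun i : Fin 2 => if (i : ℕ) < 0 then w else v) := rfl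
      rw [this, hxeq]
      congr 1
    rw [hSum, hgt] at hT
    have habs := abs_le.mp hT
    linarith [habs.1, hcw]
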